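/- Let K be a compact subset of the open upper half-plane ℂ⁺. Suppose A is a 2×2 complex matrix whose entries a₁₁, a₁₂, a₂₁, a₂₂ all lie in K, and suppose the spectral radius of the entrywise absolute-value matrix |A| = (|a_{ij}|) is at most 1. Then there exists δ > 0, depending only on K, such that every eigenvalue λ of A satisfies |λ - 1| ≥ δ. -/

import Mathlib

open Complex Matrix

/-- distance from 1 beats `1 - |z|` by a definite margin when `im z ≥ ε`. -/
lemma aux_dist (z : ℂ) (ε M : ℝ) (hε : 0 < ε) (him : ε ≤ z.im) (habs : ‖z‖ ≤ M) :
    (1 - ‖z‖)^2 + ε^2/M ≤ (‖1 - z‖)^2 := by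
  have him' : z.im ≤ ‖z‖ := (le_abs_self _).trans (Complex.abs_im_le_norm z)
  have hM : 0 < M := lt_of_lt_of_le (lt_of_lt_of_le hε (him.trans him')) habs
  have h1 : (‖z‖)^2 = z.re^2 + z.im^2 := by
    rw [Complex.sq_norm, Complex.normSq_apply]; ring
  have h2 : (‖1-z‖)^2 = (1 - z.re)^2 + z.im^2 := by
    rw [Complex.sq_norm, Complex.normSq_apply]; simp; ring
  have hre := abs_le.mp (Complex.abs_re_le_norm z)
  have key : ε^2/M ≤ 2*(‖z‖ - z.re) := by
    rw [div_le_iff₀ hM]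
    nlinarith [hre.1, hre.2, him, habs, h1, hε, him']
  nlinarith [key, h1, h2]

lemma aux_prod (α β P Q cc : ℝ) (hcc0 : 0 < cc) (hcc1 : cc ≤ 1)
    (hP0 : 0 ≤ P) (hP1 : P ≤ 1) (hQ0 : 0 ≤ Q) (hQ1 : Q ≤ 1)
    (hα : P^2 + 2*cc ≤ α^2) (hβ : Q^2 + 2*cc ≤ β^2)
    (hα0 : 0 ≤ α) (hβ0 : 0 ≤ β) : P*Q + cc^2 ≤ α*β := by
  have h3 : (P^2+2*cc)*(Q^2+2*cc) ≤ α^2*β^2 := by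
    apply mul_le_mul hα hβ (by positivity) (by positivity)
  have h4 : (0:ℝ) ≤ (1 - P*Q) * cc^2 := by nlinarith [mul_le_one₀ hP1 hQ0 hQ1]
  have h5 : (0:ℝ) ≤ (1 - cc^2) * cc^2 :=
    mul_nonneg (by nlinarith [mul_nonneg (sub_nonneg.2 hcc1) hcc0.le]) (sq_nonneg cc)
  have h6 : (0:ℝ) ≤ 2*cc*(P^2 + Q^2) := by positivity
  nlinarith [h3, mul_nonneg hα0 hβ0, mul_nonneg hP0 hQ0, sq_nonneg cc, h4, h5, h6]

lemma aux_final (α β P Q cc δ M : ℝ) (hfin : (α-δ)*(β-δ) ≤ P*Q)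
    (hPQ : P*Q + cc^2 ≤ α*β) (hδ0 : 0 < δ) (hδM : δ*(4*(1+M)) ≤ cc^2)
    (hαB : α ≤ 1+M) (hβB : β ≤ 1+M) (hM : 0 < M) : False := by
  nlinarith [mul_le_mul_of_nonneg_left hαB hδ0.le, mul_le_mul_of_nonneg_left hβB hδ0.le,
    sq_nonneg δ]

/-- Perron-type facts for a 2×2 matrix whose entrywise abs has spectral radius ≤ 1. -/
lemma aux_perron (A : Matrix (Fin 2) (Fin 2) ℂ) (hb : A 0 1 ≠ 0)
    (hspec : ∀ μ : ℂ, (∃ v : Fin 2 → ℂ, v ≠ 0 ∧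
        (A.map (fun a => ((‖a‖ : ℝ) : ℂ))).mulVec v = μ • v) → ‖μ‖ ≤ 1) :
    ‖A 0 0‖ ≤ 1 ∧ ‖A 1 1‖ ≤ 1 ∧
      ‖A 0 1‖ * ‖A 1 0‖ ≤
        (1 - ‖A 0 0‖) * (1 - ‖A 1 1‖) := by
  set p := ‖A 0 0‖ with hp
  set q := ‖A 0 1‖ with hq
  set r := ‖A 1 0‖ with hr
  set s := ‖A 1 1‖ with hs
  have hp0 : 0 ≤ p := norm_nonneg _
  have hq0 : 0 < q := norm_pos_iff.mpr hb
  have hr0 : 0 ≤ r := norm_nonneg _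
  have hs0 : 0 ≤ s := norm_nonneg _
  set t := Real.sqrt ((p - s)^2 + 4*(q*r)) with ht
  have ht0 : 0 ≤ t := Real.sqrt_nonneg _
  have ht2 : t^2 = (p - s)^2 + 4*(q*r) := Real.sq_sqrt (by positivity)
  have htps : |p - s| ≤ t := by
    rw [ht, ← Real.sqrt_sq_eq_abs]
    exact Real.sqrt_le_sqrt (by nlinarith)
  have htps' := abs_le.mp htps
  set μ := (p + s + t)/2 with hμ
  have hμ2 : 2*μ = p + s + t := by rw [hμ]; ring
  have hquad : μ^2 - (p+s)*μ + (p*s - q*r) = 0 := by nlinarith [ht2, hμ2]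
  have hμ0 : 0 ≤ μ := by nlinarith
  have hμ1 : μ ≤ 1 := by
    have hqC : (q:ℂ) ≠ 0 := by exact_mod_cast hq0.ne'
    have hwne : (![(q:ℂ), ((μ - p : ℝ):ℂ)] : Fin 2 → ℂ) ≠ 0 := by
      intro h
      have h0 := congrFun h 0
      simp at h0
      exact hqC (by exact_mod_cast h0)
    have heig : (A.map (fun a => ((‖a‖ : ℝ) : ℂ))).mulVec
        ![(q:ℂ), ((μ - p : ℝ):ℂ)] = (μ:ℂ) • ![(q:ℂ), ((μ - p : ℝ):ℂ)] := by
      funext i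
      fin_cases i
      · simp [Matrix.mulVec, dotProduct, Fin.sum_univ_two, Matrix.map_apply]
        ring
      · simp [Matrix.mulVec, dotProduct, Fin.sum_univ_two, Matrix.map_apply]
        rw [← hr, ← hs]
        have hre : r*q + s*(μ - p) = μ*(μ - p) := by nlinarith [hquad]
        exact_mod_cast hre
    have h1 := hspec (μ:ℂ) ⟨_, hwne, heig⟩
    rwa [Complex.norm_real, Real.norm_eq_abs, _root_.abs_of_nonneg hμ0] at h1
  have hp1 : p ≤ 1 := by linarith [htps'.2]
  have hs1 : s ≤ 1 := by linarith [htps'.1]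
  refine ⟨hp1, hs1, ?_⟩
  have e1 : 0 ≤ 1 - μ := by linarith
  have e2 : 0 ≤ 1 - (p + s - μ) := by linarith
  nlinarith [mul_nonneg e1 e2, hquad]

set_option maxHeartbeats 1000000 in
/-- eigenvalues of a 2×2 matrix with entries in a compact subset `K` of the
open upper half-plane, whose entrywise absolute value matrix has spectral radius at most 1,
are uniformly (depending only on `K`) bounded away from 1. -/
theorem stmt_0 (K : Set ℂ) (hK : IsCompact K) (hKup : ∀ z ∈ K, 0 < z.im) :
    ∃ δ : ℝ, 0 < δ ∧ ∀ A : Matrix (Fin 2) (Fin 2) ℂ,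
      (∀ i j, A i j ∈ K) →
      (∀ μ : ℂ, (∃ v : Fin 2 → ℂ, v ≠ 0 ∧
          (A.map (fun a => ((‖a‖ : ℝ) : ℂ))).mulVec v = μ • v) → ‖μ‖ ≤ 1) →
      ∀ lam : ℂ, (∃ v : Fin 2 → ℂ, v ≠ 0 ∧ A.mulVec v = lam • v) → δ ≤ ‖lam - 1‖ := by
  rcases K.eq_empty_or_nonempty with rfl | hne
  · exact ⟨1, one_pos, fun A hA => absurd (hA 0 0) (Set.notMem_empty _)⟩
  obtain ⟨z₀, hz₀K, hmin⟩ := hK.exists_isMinOn hne Complex.continuous_im.continuousOn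
  obtain ⟨z₁, hz₁K, hmax⟩ := hK.exists_isMaxOn hne continuous_norm.continuousOn
  set ε := z₀.im with hεdef
  set M := ‖z₁‖ with hMdef
  have hε : 0 < ε := hKup z₀ hz₀K
  have hεim : ∀ z ∈ K, ε ≤ z.im := fun z hz => isMinOn_iff.mp hmin z hz
  have habsM : ∀ z ∈ K, ‖z‖ ≤ M := fun z hz => isMaxOn_iff.mp hmax z hz
  have hεabs : ∀ z ∈ K, ε ≤ ‖z‖ := fun z hz =>
    (hεim z hz).trans ((le_abs_self _).trans (Complex.abs_im_le_norm z))
  have hεM : ε ≤ M := (hεabs z₀ hz₀K).trans (habsM z₀ hz₀K)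
  have hM : 0 < M := lt_of_lt_of_le hε hεM
  set cc := ε^2/(2*M) with hccdef
  have hcc : 0 < cc := by positivity
  set δ := min (ε/2) (cc^2/(4*(1+M))) with hδdef
  have hδ0 : 0 < δ := lt_min (by positivity) (by positivity)
  refine ⟨δ, hδ0, ?_⟩
  rintro A hA hspec lam ⟨v, hv0, hv⟩
  -- entry facts
  have hbne : A 0 1 ≠ 0 := by
    intro h
    have := hεabs _ (hA 0 1)
    rw [h] at this; simp at this; linarith
  have hcne : A 1 0 ≠ 0 := by
    intro h
    have := hεabs _ (hA 1 0)
    rw [h] at this; simp at this; linarith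
  obtain ⟨hp1, hs1, hqr⟩ := aux_perron A hbne hspec
  by_contra hcon
  push_neg at hcon
  -- eigen equations
  have h0 := congrFun hv 0
  have h1 := congrFun hv 1
  simp [Matrix.mulVec, dotProduct, Fin.sum_univ_two] at h0 h1
  have hv0ne : v 0 ≠ 0 := by
    intro h
    have hbv : A 0 1 * v 1 = 0 := by rw [h] at h0; simpa using h0
    have hv1 : v 1 = 0 := by
      rcases mul_eq_zero.mp hbv with h' | h'
      · exact absurd h' hbne
      · exact h'
    exact hv0 (funext fun i => by fin_cases i <;> assumption)
  have hv1ne : v 1 ≠ 0 := by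
    intro h
    have hcv : A 1 0 * v 0 = 0 := by rw [h] at h1; simpa using h1
    have hv1 : v 0 = 0 := by
      rcases mul_eq_zero.mp hcv with h' | h'
      · exact absurd h' hcne
      · exact h'
    exact hv0 (funext fun i => by fin_cases i <;> assumption)
  have hkey : (lam - A 0 0) * (lam - A 1 1) = A 0 1 * A 1 0 := by
    have h2 : ((lam - A 0 0) * (lam - A 1 1)) * (v 0 * v 1)
        = (A 0 1 * A 1 0) * (v 0 * v 1) := by
      linear_combination ((A 1 1 - lam) * v 1) * h0 + (-(A 0 1 * v 1)) * h1
    exact mul_right_cancel₀ (mul_ne_zero hv0ne hv1ne) h2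
  -- abbreviations
  set p := ‖A 0 0‖ with hp
  set s := ‖A 1 1‖ with hs
  set α := ‖1 - A 0 0‖ with hα
  set β := ‖1 - A 1 1‖ with hβ
  have hεp : ε ≤ p := hεabs _ (hA 0 0)
  have hεs : ε ≤ s := hεabs _ (hA 1 1)
  have hpM : p ≤ M := habsM _ (hA 0 0)
  have hsM : s ≤ M := habsM _ (hA 1 1)
  have hcc1 : cc ≤ 1 := by
    rw [hccdef, div_le_one (by positivity)]
    nlinarith
  -- distance lower bounds
  have h2cc : ε^2/M = 2*cc := by rw [hccdef]; field_simp
  have hda : (1-p)^2 + 2*cc ≤ α^2 := by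
    have := aux_dist (A 0 0) ε M hε (hεim _ (hA 0 0)) hpM
    rw [h2cc] at this; exact this
  have hdd : (1-s)^2 + 2*cc ≤ β^2 := by
    have := aux_dist (A 1 1) ε M hε (hεim _ (hA 1 1)) hsM
    rw [h2cc] at this; exact this
  have hα0 : 0 ≤ α := norm_nonneg _
  have hβ0 : 0 ≤ β := norm_nonneg _
  have hPQ : (1-p)*(1-s) + cc^2 ≤ α*β :=
    aux_prod α β (1-p) (1-s) cc hcc hcc1 (by linarith) (by linarith)
      (by linarith) (by linarith) hda hdd hα0 hβ0
  -- triangle inequalities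
  have hlam1 : ‖lam - 1‖ < δ := by
    exact hcon
  have htri1 : α - δ ≤ ‖lam - A 0 0‖ := by
    have := norm_sub_le_norm_sub_add_norm_sub 1 lam (A 0 0)
    have h' : ‖1 - lam‖ = ‖lam - 1‖ := norm_sub_rev 1 lam
    rw [← hα] at this
    linarith
  have htri2 : β - δ ≤ ‖lam - A 1 1‖ := by
    have := norm_sub_le_norm_sub_add_norm_sub 1 lam (A 1 1)
    have h' : ‖1 - lam‖ = ‖lam - 1‖ := norm_sub_rev 1 lam
    rw [← hβ] at this
    linarith
  have hδε : δ ≤ ε/2 := min_le_left _ _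
  have hδ2 : δ ≤ cc^2/(4*(1+M)) := min_le_right _ _
  have hαε : ε ≤ α := by
    have h' : |(1 - A 0 0).im| ≤ α := Complex.abs_im_le_norm _
    have : (1 - A 0 0).im = -(A 0 0).im := by simp
    rw [this, abs_neg] at h'
    exact le_trans (le_trans (hεim _ (hA 0 0)) (le_abs_self _)) h'
  have hβε : ε ≤ β := by
    have h' : |(1 - A 1 1).im| ≤ β := Complex.abs_im_le_norm _
    have : (1 - A 1 1).im = -(A 1 1).im := by simp
    rw [this, abs_neg] at h'
    exact le_trans (le_trans (hεim _ (hA 1 1)) (le_abs_self _)) h'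
  have hαδ : 0 ≤ α - δ := by linarith
  have hβδ : 0 ≤ β - δ := by linarith
  have hprod : ‖lam - A 0 0‖ * ‖lam - A 1 1‖
      = ‖A 0 1‖ * ‖A 1 0‖ := by
    rw [← norm_mul, ← norm_mul, hkey]
  have hfin : (α - δ)*(β - δ) ≤ (1-p)*(1-s) := by
    calc (α - δ)*(β - δ) ≤ ‖lam - A 0 0‖ * ‖lam - A 1 1‖ :=
          mul_le_mul htri1 htri2 hβδ (norm_nonneg _)
      _ = ‖A 0 1‖ * ‖A 1 0‖ := hprod
      _ ≤ (1-p)*(1-s) := hqr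
  -- bounds on α β
  have hαB : α ≤ 1 + M := by
    have h' : α ≤ 1 + p := by
      rw [hα, hp]
      simpa [sub_eq_add_neg] using norm_add_le 1 (-(A 0 0))
    linarith [hpM]
  have hβB : β ≤ 1 + M := by
    have h' : β ≤ 1 + s := by
      rw [hβ, hs]
      simpa [sub_eq_add_neg] using norm_add_le 1 (-(A 1 1))
    linarith [hsM]
  have hδM : δ * (4*(1+M)) ≤ cc^2 := (le_div_iff₀ (by positivity)).mp hδ2
  exact aux_final α β (1-p) (1-s) cc δ M hfin hPQ hδ0 hδM hαB hβB hM
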